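/- For any countable ordinal ξ, every subset C of the set 2^ξ of binary sequences of length ξ is countably cofinal with respect to the lexicographic order; that is, there exists an at most countable subset C' ⊆ C such that for every s ∈ C there is t ∈ C' with s ≤_lex t. -/

import Mathlib

open Cardinal

/-- The lexicographic (non-strict) order on binary sequences of length `ξ`:
`s ≤lex t` iff `s = t` or at the least point `η` of disagreement `s η = false < true = t η`. -/
def lexLE {ξ : Ordinal} (s t : {η : Ordinal // η < ξ} → Bool) : Prop :=
  s = t ∨ ∃ η, (∀ ζ, ζ < η → s ζ = t ζ) ∧ s η = false ∧ t η = true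

open scoped Classical in
/-- The "supremum branch" of `C`, defined by transfinite recursion: at stage `α`,
take `true` iff some element of `C` agreeing with the branch below `α` has value `true` at `α`. -/
noncomputable def lexBranch {ξ : Ordinal} (C : Set ({η : Ordinal // η < ξ} → Bool)) :
    Ordinal → Bool :=
  Ordinal.lt_wf.fix fun α IH =>
    decide (∃ s ∈ C, (∀ ζ : {η : Ordinal // η < ξ}, ∀ h : (ζ : Ordinal) < α, s ζ = IH ζ h) ∧
      ∀ h : α < ξ, s ⟨α, h⟩ = true)

theorem lexBranch_eq_true_iff {ξ : Ordinal} (C : Set ({η : Ordinal // η < ξ} → Bool))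
    (α : Ordinal) :
    lexBranch C α = true ↔
      ∃ s ∈ C, (∀ ζ : {η : Ordinal // η < ξ}, (ζ : Ordinal) < α → s ζ = lexBranch C ζ) ∧
        ∀ h : α < ξ, s ⟨α, h⟩ = true := by
  classical
  conv_lhs => rw [lexBranch, Ordinal.lt_wf.fix_eq]
  rw [decide_eq_true_iff]
  rfl

/-- For any countable ordinal `ξ`, every subset `C` of `2^ξ` is countably cofinal
with respect to the lexicographic order. -/
theorem lex_countably_cofinal (ξ : Ordinal) (hξ : ξ.card ≤ aleph0)
    (C : Set ({η : Ordinal // η < ξ} → Bool)) :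
    ∃ C' ⊆ C, C'.Countable ∧ ∀ s ∈ C, ∃ t ∈ C', lexLE s t := by
  classical
  -- the index type is countable
  have hcntI : Countable {η : Ordinal // η < ξ} := by
    rw [← Cardinal.mk_le_aleph0_iff]
    have h1 : #(Set.Iio ξ) = Cardinal.lift.{u_1+1} ξ.card := Ordinal.mk_Iio_ordinal ξ
    have h2 : #{η : Ordinal // η < ξ} = #(Set.Iio ξ) := rfl
    rw [h2, h1, ← Cardinal.lift_aleph0.{u_1+1, u_1}]
    exact Cardinal.lift_le.mpr hξ
  set b : {η : Ordinal // η < ξ} → Bool := fun η => lexBranch C η with hb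
  set P : {η : Ordinal // η < ξ} → Prop :=
    fun η => ∃ t ∈ C, ∀ ζ : {η : Ordinal // η < ξ}, ζ ≤ η → t ζ = b ζ with hP
  set W : {η : Ordinal // η < ξ} → Set ({η : Ordinal // η < ξ} → Bool) :=
    fun η => if h : P η then {h.choose} else ∅ with hW
  refine ⟨(C ∩ {b}) ∪ ⋃ η, W η, ?_, ?_, ?_⟩
  · rintro t (⟨htC, -⟩ | ht)
    · exact htC
    · simp only [Set.mem_iUnion] at ht
      obtain ⟨η, ht⟩ := ht
      rw [hW] at ht
      dsimp only at ht
      split_ifs at ht with h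
      · rw [Set.mem_singleton_iff] at ht
        subst ht; exact h.choose_spec.1
      · exact absurd ht (Set.notMem_empty t)
  · refine Set.Countable.union ((Set.countable_singleton b).mono Set.inter_subset_right) ?_
    refine Set.countable_iUnion fun η => ?_
    rw [hW]
    dsimp only
    split_ifs
    · exact Set.countable_singleton _
    · exact Set.countable_empty
  · intro s hs
    by_cases hsb : s = b
    · exact ⟨s, Or.inl ⟨hs, by simp [hsb]⟩, Or.inl rfl⟩
    · -- least disagreement point
      have hne : {α : Ordinal | ∃ h : α < ξ, s ⟨α, h⟩ ≠ b ⟨α, h⟩}.Nonempty := by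
        by_contra h
        apply hsb
        funext ζ
        by_contra hζ
        exact h ⟨ζ, ζ.2, by simpa using hζ⟩
      set η₀ := Ordinal.lt_wf.min _ hne with hη₀
      obtain ⟨hη₀ξ, hdis⟩ := Ordinal.lt_wf.min_mem _ hne
      set η : {η : Ordinal // η < ξ} := ⟨η₀, hη₀ξ⟩ with hη
      have hagree : ∀ ζ : {η : Ordinal // η < ξ}, (ζ : Ordinal) < η₀ → s ζ = b ζ := by
        intro ζ hζ
        by_contra hc
        exact Ordinal.lt_wf.not_lt_min {α : Ordinal | ∃ h : α < ξ, s ⟨α, h⟩ ≠ b ⟨α, h⟩} (x := (ζ : Ordinal)) ⟨ζ.2, by simpa using hc⟩ hζ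
      -- b η = true
      have hbη : b η = true := by
        by_contra hbf
        rw [Bool.not_eq_true] at hbf
        have hsη : s η = true := by
          cases hsv : s η with
          | false => exact absurd (hsv.trans hbf.symm) hdis
          | true => rfl
        have hgood : lexBranch C η₀ = true := by
          rw [lexBranch_eq_true_iff]
          exact ⟨s, hs, hagree, fun h => hsη⟩
        rw [hb] at hbf
        simp only [hη] at hbf
        exact absurd hgood (by simp [hbf])
      have hsη : s η = false := by
        cases hsv : s η with
        | false => rfl
        | true => exact absurd (hsv.trans hbη.symm) hdis
      -- b η = true gives a witness in C agreeing with b up to and including η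
      have hPη : P η := by
        have hiff := (lexBranch_eq_true_iff C η₀).mp hbη
        obtain ⟨t, htC, hagt, htη⟩ := hiff
        refine ⟨t, htC, fun ζ hζ => ?_⟩
        rcases lt_or_eq_of_le hζ with hlt | heq
        · exact hagt ζ hlt
        · subst heq; rw [hbη]; exact htη η.2
      obtain ⟨htC, htag⟩ := hPη.choose_spec
      refine ⟨hPη.choose, Or.inr ?_, Or.inr ⟨η, ?_, hsη, ?_⟩⟩
      · exact Set.mem_iUnion.mpr ⟨η, by rw [hW]; simp [hPη]⟩
      · intro ζ hζ
        rw [hagree ζ hζ, htag ζ (le_of_lt hζ)]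
      · rw [htag η le_rfl]; exact hbη
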